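/- (One-step descent bound, noisy/corrupted-gradient case.) Let U* and U be real n×r matrices with orthonormal columns, P := I − U*(U*)ᵀ, δ := ‖P U‖. Let B and B* be real r×q matrices, let grad_cln and Err be real n×r matrices, set grad := grad_cln − Err, X* := U* B*, and E := (U B − X*) Bᵀ. Assume η ≥ 0, η‖B‖² ≤ 0.9, and 1 − η‖E‖ − η‖E − grad_cln‖ − η‖Err‖ > 0. Then 1 − η‖grad‖ > 0 and ‖P(U − η·grad)‖ / (1 − η‖grad‖) ≤ [ δ·(1 − η·λ_min(B Bᵀ)) + η‖E − grad_cln‖ + η‖Err‖ ] / [ 1 − η‖E‖ − η‖E − grad_cln‖ − η‖Err‖ ]. -/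

import Mathlib

open Matrix
open scoped RealInnerProductSpace
open scoped Matrix.Norms.L2Operator

/-- Spectral norm (operator norm induced by the Euclidean norm) of a real matrix. -/
noncomputable def specNorm {m n : ℕ} (M : Matrix (Fin m) (Fin n) ℝ) : ℝ :=
  ‖LinearMap.toContinuousLinearMap (Matrix.toEuclideanLin M)‖

lemma specNorm_eq {m n : ℕ} (M : Matrix (Fin m) (Fin n) ℝ) : specNorm M = ‖M‖ := rfl

lemma inner_mulVec_eq {m n : ℕ} (A : Matrix (Fin m) (Fin n) ℝ)
    (x : EuclideanSpace ℝ (Fin m)) (y : EuclideanSpace ℝ (Fin n)) :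
    ⟪x, Matrix.toEuclideanLin A y⟫ = ⟪Matrix.toEuclideanLin Aᵀ x, y⟫ := by
  simp only [Matrix.toEuclideanLin_apply, PiLp.inner_apply, RCLike.inner_apply, conj_trivial,
    Matrix.mulVec, dotProduct, PiLp.toLp_apply,
    Matrix.transpose_apply, Finset.mul_sum, Finset.sum_mul]
  rw [Finset.sum_comm]
  congr 1; ext i; congr 1; ext j; ring

lemma toEuclideanLin_norm_le {m n : ℕ} (A : Matrix (Fin m) (Fin n) ℝ)
    (y : EuclideanSpace ℝ (Fin n)) : ‖Matrix.toEuclideanLin A y‖ ≤ ‖A‖ * ‖y‖ :=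
  (LinearMap.toContinuousLinearMap (Matrix.toEuclideanLin A)).le_opNorm y

lemma opNorm_le_bound' {m n : ℕ} (A : Matrix (Fin m) (Fin n) ℝ) (c : ℝ) (hc : 0 ≤ c)
    (h : ∀ y : EuclideanSpace ℝ (Fin n), ‖Matrix.toEuclideanLin A y‖ ≤ c * ‖y‖) : ‖A‖ ≤ c :=
  ContinuousLinearMap.opNorm_le_bound _ hc h

lemma norm_le_of_rayleigh {r : ℕ} (M : Matrix (Fin r) (Fin r) ℝ) (hsym : Mᵀ = M) (s : ℝ)
    (hs : 0 ≤ s)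
    (h : ∀ y : EuclideanSpace ℝ (Fin r), |⟪y, Matrix.toEuclideanLin M y⟫| ≤ s * ‖y‖ ^ 2) :
    ‖M‖ ≤ s := by
  set L := Matrix.toEuclideanLin M with hL
  apply opNorm_le_bound' M s hs
  intro x
  rcases eq_or_ne (‖L x‖) 0 with h0 | h0
  · rw [h0]; positivity
  have hx : x ≠ 0 := by rintro rfl; simp at h0
  have hxn : (0:ℝ) < ‖x‖ := norm_pos_iff.mpr hx
  have hLx : (0:ℝ) < ‖L x‖ := lt_of_le_of_ne (norm_nonneg _) (Ne.symm h0)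
  set u : EuclideanSpace ℝ (Fin r) := (‖x‖ / ‖L x‖) • L x with hu
  have hun : ‖u‖ = ‖x‖ := by
    rw [hu, norm_smul, Real.norm_eq_abs, abs_of_pos (by positivity)]
    field_simp
  have hsymm : ∀ a b : EuclideanSpace ℝ (Fin r), ⟪a, L b⟫ = ⟪b, L a⟫ := by
    intro a b
    rw [hL, inner_mulVec_eq, hsym, real_inner_comm]
  have polar : 4 * ⟪u, L x⟫ = ⟪u + x, L (u + x)⟫ - ⟪u - x, L (u - x)⟫ := by
    simp only [map_add, map_sub, inner_add_left, inner_add_right, inner_sub_left,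
      inner_sub_right]
    rw [hsymm x u]; ring
  have hpar : ‖u + x‖ ^ 2 + ‖u - x‖ ^ 2 = 2 * (‖u‖ ^ 2 + ‖x‖ ^ 2) := by
    have := parallelogram_law_with_norm ℝ u x
    nlinarith [this]
  have huLx : ⟪u, L x⟫ = ‖x‖ / ‖L x‖ * ‖L x‖ ^ 2 := by
    rw [hu, real_inner_smul_left]
    congr 1
    rw [real_inner_self_eq_norm_sq]
  have key : 4 * ⟪u, L x⟫ ≤ s * (4 * ‖x‖ ^ 2) := by
    rw [polar]
    have h1 := h (u + x)
    have h2 := h (u - x)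
    have h3 : s * (‖u + x‖ ^ 2 + ‖u - x‖ ^ 2) = s * (4 * ‖x‖ ^ 2) := by
      rw [hpar, hun]; ring
    obtain ⟨h1a, h1b⟩ := abs_le.mp h1
    obtain ⟨h2a, h2b⟩ := abs_le.mp h2
    nlinarith [h1b, h2a, h3]
  rw [huLx] at key
  have : ‖x‖ / ‖L x‖ * ‖L x‖ ^ 2 = ‖x‖ * ‖L x‖ := by field_simp
  rw [this] at key
  nlinarith [key]

/-- Smallest eigenvalue of a (symmetric) square matrix, via the Rayleigh quotient:
minimum of `⟪x, M x⟫` over unit vectors `x`. -/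
noncomputable def lambdaMin {n : ℕ} (M : Matrix (Fin n) (Fin n) ℝ) : ℝ :=
  ⨅ x : Metric.sphere (0 : EuclideanSpace ℝ (Fin n)) 1,
    ⟪(x : EuclideanSpace ℝ (Fin n)),
      Matrix.toEuclideanLin M (x : EuclideanSpace ℝ (Fin n))⟫

section BBt
variable {r q : ℕ} (B : Matrix (Fin r) (Fin q) ℝ)

lemma rho_eq (y : EuclideanSpace ℝ (Fin r)) :
    ⟪y, Matrix.toEuclideanLin (B * Bᵀ) y⟫ = ‖Matrix.toEuclideanLin Bᵀ y‖ ^ 2 := by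
  have hm : Matrix.toEuclideanLin (B * Bᵀ) y
      = Matrix.toEuclideanLin B (Matrix.toEuclideanLin Bᵀ y) := by
    simp [Matrix.toEuclideanLin_apply, Matrix.mulVec_mulVec]
  rw [hm, inner_mulVec_eq, real_inner_self_eq_norm_sq]

lemma rho_nonneg (y : EuclideanSpace ℝ (Fin r)) :
    0 ≤ ⟪y, Matrix.toEuclideanLin (B * Bᵀ) y⟫ := by
  rw [rho_eq]; positivity

lemma rho_le (y : EuclideanSpace ℝ (Fin r)) :
    ⟪y, Matrix.toEuclideanLin (B * Bᵀ) y⟫ ≤ ‖B‖ ^ 2 * ‖y‖ ^ 2 := by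
  set t := ‖Matrix.toEuclideanLin Bᵀ y‖ with ht
  have h1 : ⟪y, Matrix.toEuclideanLin (B * Bᵀ) y⟫ = t ^ 2 := rho_eq B y
  have hm : Matrix.toEuclideanLin (B * Bᵀ) y
      = Matrix.toEuclideanLin B (Matrix.toEuclideanLin Bᵀ y) := by
    simp [Matrix.toEuclideanLin_apply, Matrix.mulVec_mulVec]
  have h2 : t ^ 2 ≤ ‖y‖ * (‖B‖ * t) := by
    rw [← h1, hm]
    calc ⟪y, Matrix.toEuclideanLin B (Matrix.toEuclideanLin Bᵀ y)⟫
        ≤ ‖y‖ * ‖Matrix.toEuclideanLin B (Matrix.toEuclideanLin Bᵀ y)‖ :=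
          real_inner_le_norm _ _
      _ ≤ ‖y‖ * (‖B‖ * t) := by
          gcongr
          exact toEuclideanLin_norm_le B _
  rw [h1]
  nlinarith [norm_nonneg y, (by exact norm_nonneg _ : (0:ℝ) ≤ ‖B‖), ht ▸ norm_nonneg (Matrix.toEuclideanLin Bᵀ y), sq_nonneg (t - ‖B‖ * ‖y‖)]

lemma lambdaMin_bddBelow :
    BddBelow (Set.range fun x : Metric.sphere (0 : EuclideanSpace ℝ (Fin r)) 1 =>
      ⟪(x : EuclideanSpace ℝ (Fin r)),
        Matrix.toEuclideanLin (B * Bᵀ) (x : EuclideanSpace ℝ (Fin r))⟫) := by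
  refine ⟨0, ?_⟩
  rintro z ⟨x, rfl⟩
  exact rho_nonneg B _

lemma lambdaMin_nonneg : 0 ≤ lambdaMin (B * Bᵀ) := by
  by_cases h : Nonempty (Metric.sphere (0 : EuclideanSpace ℝ (Fin r)) 1)
  · exact le_ciInf fun x => rho_nonneg B _
  · rw [lambdaMin, iInf, Set.range_eq_empty_iff.mpr (not_nonempty_iff.mp h), Real.sInf_empty]

lemma lambdaMin_le_rho (y : EuclideanSpace ℝ (Fin r)) :
    lambdaMin (B * Bᵀ) * ‖y‖ ^ 2 ≤ ⟪y, Matrix.toEuclideanLin (B * Bᵀ) y⟫ := by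
  rcases eq_or_ne y 0 with rfl | hy
  · simp
  · have hyn : (0:ℝ) < ‖y‖ := norm_pos_iff.mpr hy
    set x : EuclideanSpace ℝ (Fin r) := ‖y‖⁻¹ • y with hx
    have hxs : x ∈ Metric.sphere (0 : EuclideanSpace ℝ (Fin r)) 1 := by
      simp [hx, norm_smul, abs_of_pos (inv_pos.mpr hyn), inv_mul_cancel₀ hyn.ne']
    have hle : lambdaMin (B * Bᵀ) ≤ ⟪x, Matrix.toEuclideanLin (B * Bᵀ) x⟫ :=
      ciInf_le (lambdaMin_bddBelow B) ⟨x, hxs⟩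
    have hscale : ⟪x, Matrix.toEuclideanLin (B * Bᵀ) x⟫
        = ‖y‖⁻¹ ^ 2 * ⟪y, Matrix.toEuclideanLin (B * Bᵀ) y⟫ := by
      rw [hx, _root_.map_smul, real_inner_smul_left, real_inner_smul_right]; ring
    rw [hscale] at hle
    have := mul_le_mul_of_nonneg_right hle (le_of_lt (by positivity : (0:ℝ) < ‖y‖ ^ 2))
    calc lambdaMin (B * Bᵀ) * ‖y‖ ^ 2 ≤ ‖y‖⁻¹ ^ 2 * ⟪y, Matrix.toEuclideanLin (B * Bᵀ) y⟫ * ‖y‖ ^ 2 := this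
      _ = ⟪y, Matrix.toEuclideanLin (B * Bᵀ) y⟫ := by field_simp

lemma lambdaMin_le_normsq (hr : 0 < r) : lambdaMin (B * Bᵀ) ≤ ‖B‖ ^ 2 := by
  have : Fin r := ⟨0, hr⟩
  set x₀ : EuclideanSpace ℝ (Fin r) := EuclideanSpace.single this 1 with hx0
  have hxs : x₀ ∈ Metric.sphere (0 : EuclideanSpace ℝ (Fin r)) 1 := by
    simp [hx0, EuclideanSpace.norm_single]
  calc lambdaMin (B * Bᵀ) ≤ ⟪x₀, Matrix.toEuclideanLin (B * Bᵀ) x₀⟫ :=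
        ciInf_le (lambdaMin_bddBelow B) ⟨x₀, hxs⟩
    _ ≤ ‖B‖ ^ 2 * ‖x₀‖ ^ 2 := rho_le B x₀
    _ = ‖B‖ ^ 2 := by
        rw [show ‖x₀‖ = 1 by simpa [Metric.mem_sphere] using hxs]; ring

lemma lambdaMin_eq_zero_of_r_zero (h : r = 0) : lambdaMin (B * Bᵀ) = 0 := by
  subst h
  have : IsEmpty (Metric.sphere (0 : EuclideanSpace ℝ (Fin 0)) 1) := by
    constructor
    rintro ⟨x, hx⟩
    rw [Metric.mem_sphere, Subsingleton.elim x 0] at hx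
    simp at hx
  rw [lambdaMin, iInf, Set.range_eq_empty_iff.mpr this, Real.sInf_empty]

end BBt

lemma norm_one_sub_smul_le {r q : ℕ} (B : Matrix (Fin r) (Fin q) ℝ) (η : ℝ)
    (hη0 : 0 ≤ η) (hηB : η * ‖B‖ ^ 2 ≤ 0.9) :
    ‖(1 : Matrix (Fin r) (Fin r) ℝ) - η • (B * Bᵀ)‖ ≤ 1 - η * lambdaMin (B * Bᵀ) := by
  have hlm0 : 0 ≤ lambdaMin (B * Bᵀ) := lambdaMin_nonneg B
  have hetalm : η * lambdaMin (B * Bᵀ) ≤ 0.9 := by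
    rcases Nat.eq_zero_or_pos r with hr | hr
    · rw [lambdaMin_eq_zero_of_r_zero B hr]; norm_num
    · calc η * lambdaMin (B * Bᵀ) ≤ η * ‖B‖ ^ 2 :=
          mul_le_mul_of_nonneg_left (lambdaMin_le_normsq B hr) hη0
        _ ≤ 0.9 := hηB
  have hs : (0:ℝ) ≤ 1 - η * lambdaMin (B * Bᵀ) := by linarith
  refine norm_le_of_rayleigh _ ?_ _ hs ?_
  · simp [Matrix.transpose_smul, Matrix.transpose_mul]
  · intro y
    have hval : ⟪y, Matrix.toEuclideanLin ((1 : Matrix (Fin r) (Fin r) ℝ) - η • (B * Bᵀ)) y⟫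
        = ‖y‖ ^ 2 - η * ⟪y, Matrix.toEuclideanLin (B * Bᵀ) y⟫ := by
      rw [map_sub, _root_.map_smul]
      simp only [LinearMap.sub_apply, LinearMap.smul_apply]
      rw [inner_sub_right, real_inner_smul_right]
      congr 2
      · rw [show Matrix.toEuclideanLin (1 : Matrix (Fin r) (Fin r) ℝ) y = y by
          simp [Matrix.toEuclideanLin_apply, Matrix.one_mulVec],
          real_inner_self_eq_norm_sq]
    rw [hval, abs_le]
    have h1 : lambdaMin (B * Bᵀ) * ‖y‖ ^ 2 ≤ ⟪y, Matrix.toEuclideanLin (B * Bᵀ) y⟫ :=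
      lambdaMin_le_rho B y
    have h2 : ⟪y, Matrix.toEuclideanLin (B * Bᵀ) y⟫ ≤ ‖B‖ ^ 2 * ‖y‖ ^ 2 := rho_le B y
    have hyn : (0:ℝ) ≤ ‖y‖ ^ 2 := by positivity
    constructor
    · nlinarith [mul_le_mul_of_nonneg_left h2 hη0, mul_le_mul_of_nonneg_right hηB hyn]
    · nlinarith [mul_le_mul_of_nonneg_left h1 hη0]

/-- one-step descent bound, noisy/corrupted-gradient case. -/
theorem altGDmin_one_step_descent_noisy (n r q : ℕ)
    (Ustar U : Matrix (Fin n) (Fin r) ℝ)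
    (hU : Uᵀ * U = 1) (hUs : Ustarᵀ * Ustar = 1)
    (B Bstar : Matrix (Fin r) (Fin q) ℝ)
    (grad_cln Err : Matrix (Fin n) (Fin r) ℝ) (η : ℝ)
    (P : Matrix (Fin n) (Fin n) ℝ)
    (hP : P = (1 : Matrix (Fin n) (Fin n) ℝ) - Ustar * Ustarᵀ)
    (δ : ℝ) (hδdef : δ = specNorm (P * U))
    (grad : Matrix (Fin n) (Fin r) ℝ) (hgrad : grad = grad_cln - Err)
    (Xstar : Matrix (Fin n) (Fin q) ℝ) (hX : Xstar = Ustar * Bstar)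
    (E : Matrix (Fin n) (Fin r) ℝ) (hE : E = (U * B - Xstar) * Bᵀ)
    (hη0 : 0 ≤ η) (hηB : η * specNorm B ^ 2 ≤ 0.9)
    (hden : 0 < 1 - η * specNorm E - η * specNorm (E - grad_cln) - η * specNorm Err) :
    0 < 1 - η * specNorm grad ∧
    specNorm (P * (U - η • grad)) / (1 - η * specNorm grad) ≤
      (δ * (1 - η * lambdaMin (B * Bᵀ)) + η * specNorm (E - grad_cln) + η * specNorm Err) /
        (1 - η * specNorm E - η * specNorm (E - grad_cln) - η * specNorm Err) := by
  simp only [specNorm_eq] at *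
  -- P basics
  have hPUs : P * Ustar = 0 := by
    rw [hP, Matrix.sub_mul, Matrix.one_mul, Matrix.mul_assoc, hUs, Matrix.mul_one, sub_self]
  have hPsym : Pᴴ = P := by
    have : Pᴴ = Pᵀ := by ext i j; simp [Matrix.conjTranspose_apply]
    rw [this, hP]
    simp [Matrix.transpose_sub, Matrix.transpose_mul]
  have hPP : P * P = P := by
    rw [hP]
    simp only [Matrix.sub_mul, Matrix.mul_sub, Matrix.one_mul, Matrix.mul_one]
    rw [Matrix.mul_assoc Ustar Ustarᵀ (Ustar * Ustarᵀ), ← Matrix.mul_assoc Ustarᵀ Ustar Ustarᵀ,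
      hUs, Matrix.one_mul]
    abel
  have hPnorm : ‖P‖ ≤ 1 := by
    have h := Matrix.l2_opNorm_conjTranspose_mul_self P
    rw [hPsym, hPP] at h
    nlinarith [norm_nonneg P]
  -- the gradient decomposition identity
  have hPE : P * E = (P * U) * (B * Bᵀ) := by
    rw [hE, hX, ← Matrix.mul_assoc, Matrix.mul_sub, ← Matrix.mul_assoc P Ustar Bstar, hPUs,
      Matrix.zero_mul, sub_zero]
    simp only [Matrix.mul_assoc]
  have key : P * (U - η • grad)
      = (P * U) * ((1 : Matrix (Fin r) (Fin r) ℝ) - η • (B * Bᵀ))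
        + η • (P * (E - grad_cln)) + η • (P * Err) := by
    rw [hgrad]
    rw [Matrix.mul_sub, Matrix.mul_smul, Matrix.mul_sub, Matrix.mul_sub, Matrix.mul_sub,
      Matrix.mul_one, Matrix.mul_smul, ← hPE]
    simp only [smul_sub]
    abel
  -- numerator bound
  set s : ℝ := 1 - η * lambdaMin (B * Bᵀ) with hsdef
  have hBBt : ‖(1 : Matrix (Fin r) (Fin r) ℝ) - η • (B * Bᵀ)‖ ≤ s :=
    norm_one_sub_smul_le B η hη0 hηB
  have hs0 : 0 ≤ s := le_trans (norm_nonneg _) hBBt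
  have hPmul : ∀ M : Matrix (Fin n) (Fin r) ℝ, ‖P * M‖ ≤ ‖M‖ := by
    intro M
    calc ‖P * M‖ ≤ ‖P‖ * ‖M‖ := Matrix.l2_opNorm_mul P M
      _ ≤ 1 * ‖M‖ := mul_le_mul_of_nonneg_right hPnorm (norm_nonneg _)
      _ = ‖M‖ := one_mul _
  have hnum : ‖P * (U - η • grad)‖
      ≤ ‖P * U‖ * s + η * ‖E - grad_cln‖ + η * ‖Err‖ := by
    rw [key]
    calc ‖(P * U) * ((1 : Matrix (Fin r) (Fin r) ℝ) - η • (B * Bᵀ))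
          + η • (P * (E - grad_cln)) + η • (P * Err)‖
        ≤ ‖(P * U) * ((1 : Matrix (Fin r) (Fin r) ℝ) - η • (B * Bᵀ))‖
          + ‖η • (P * (E - grad_cln))‖ + ‖η • (P * Err)‖ := norm_add₃_le
      _ ≤ ‖P * U‖ * s + η * ‖E - grad_cln‖ + η * ‖Err‖ := by
          gcongr ?_ + ?_ + ?_
          · calc ‖(P * U) * ((1 : Matrix (Fin r) (Fin r) ℝ) - η • (B * Bᵀ))‖
                ≤ ‖P * U‖ * ‖(1 : Matrix (Fin r) (Fin r) ℝ) - η • (B * Bᵀ)‖ :=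
                  Matrix.l2_opNorm_mul _ _
              _ ≤ ‖P * U‖ * s := mul_le_mul_of_nonneg_left hBBt (norm_nonneg _)
          · rw [norm_smul, Real.norm_eq_abs, abs_of_nonneg hη0]
            exact mul_le_mul_of_nonneg_left (hPmul _) hη0
          · rw [norm_smul, Real.norm_eq_abs, abs_of_nonneg hη0]
            exact mul_le_mul_of_nonneg_left (hPmul _) hη0
  -- denominator bound
  have hgradn : ‖grad‖ ≤ ‖E‖ + ‖E - grad_cln‖ + ‖Err‖ := by
    have h1 : grad = (E - (E - grad_cln)) - Err := by rw [hgrad]; abel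
    rw [h1]
    calc ‖(E - (E - grad_cln)) - Err‖ ≤ ‖E - (E - grad_cln)‖ + ‖Err‖ := norm_sub_le _ _
      _ ≤ (‖E‖ + ‖E - grad_cln‖) + ‖Err‖ := by gcongr; exact norm_sub_le _ _
  have hdeng : 1 - η * ‖E‖ - η * ‖E - grad_cln‖ - η * ‖Err‖ ≤ 1 - η * ‖grad‖ := by
    have := mul_le_mul_of_nonneg_left hgradn hη0
    linarith
  have hpos : 0 < 1 - η * ‖grad‖ := lt_of_lt_of_le hden hdeng
  refine ⟨hpos, ?_⟩
  have hnum2 : ‖P * (U - η • grad)‖ ≤ δ * s + η * ‖E - grad_cln‖ + η * ‖Err‖ := by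
    rw [hδdef]; exact hnum
  have hnumRHS : 0 ≤ δ * s + η * ‖E - grad_cln‖ + η * ‖Err‖ := by
    have : 0 ≤ δ := hδdef ▸ norm_nonneg _
    positivity
  exact div_le_div₀ hnumRHS hnum2 hden hdeng
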